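/- Let f : ℝᵈ → ℝ be C², μ-strongly-convex, L-smooth, with ODE gradients bounded by ℓ. Let ∇̃f be a stochastic/perturbed gradient oracle with ‖∇̃f(x) − ∇f(x)‖ ≤ R for all x, and let Ψ̃(x) = x − h∇̃f(x). If ε > R/μ and 0 < h ≤ min{2(με − R)/(ℓL), 1/L}, then the sampled gradient flow (yₖ) is ε-shadowed by the orbit of Ψ̃ starting at x₀ = y₀. -/

import Mathlib

open InnerProductSpace Set

local notation "⟪" x ", " y "⟫" => @inner ℝ _ _ x y

/-- A symmetric operator whose quadratic form is bounded by `c‖v‖²` in absolute value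
has operator norm pointwise bound `c`. -/
lemma sym_apply_norm_le {E : Type*} [NormedAddCommGroup E] [InnerProductSpace ℝ E]
    (T : E →L[ℝ] E) (c : ℝ) (hc : 0 ≤ c)
    (hsymm : ∀ u v : E, ⟪T u, v⟫ = ⟪u, T v⟫)
    (hquad : ∀ v : E, |⟪T v, v⟫| ≤ c * ‖v‖ ^ 2) (u : E) :
    ‖T u‖ ≤ c * ‖u‖ := by
  rcases eq_or_ne (T u) 0 with h0 | h0
  · simp only [h0, norm_zero]; positivity
  have hu : u ≠ 0 := by rintro rfl; simp at h0
  have hTu : 0 < ‖T u‖ := norm_pos_iff.mpr h0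
  have hun : 0 < ‖u‖ := norm_pos_iff.mpr hu
  set v := (‖u‖ / ‖T u‖) • T u with hv
  have hvn : ‖v‖ = ‖u‖ := by
    rw [hv, norm_smul, Real.norm_eq_abs, abs_of_nonneg (by positivity)]
    field_simp
  have hTuv : ⟪T u, v⟫ = ‖u‖ * ‖T u‖ := by
    rw [hv, real_inner_smul_right, real_inner_self_eq_norm_mul_norm]
    field_simp
  have h2 : ⟪T v, u⟫ = ⟪T u, v⟫ := by
    rw [hsymm u v]; exact real_inner_comm _ _
  have key : ⟪T (u+v), u+v⟫ - ⟪T (u-v), u-v⟫ = 4 * ⟪T u, v⟫ := by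
    simp only [map_add, map_sub, inner_add_left, inner_add_right, inner_sub_left,
      inner_sub_right]
    linarith [h2]
  have par : ‖u+v‖^2 + ‖u-v‖^2 = 2*(‖u‖^2 + ‖v‖^2) := by
    have := parallelogram_law_with_norm ℝ u v
    nlinarith [this]
  have hb : 4 * ⟪T u, v⟫ ≤ c * ‖u+v‖^2 + c * ‖u-v‖^2 := by
    rw [← key]
    have h1 := (abs_le.mp (hquad (u+v))).2
    have h2' := neg_le_of_abs_le (hquad (u-v))
    linarith
  rw [hTuv] at hb
  rw [hvn] at par
  nlinarith

lemma gradient_eq_comp {d : ℕ} (f : EuclideanSpace ℝ (Fin d) → ℝ) :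
    gradient f = ⇑(toDual ℝ (EuclideanSpace ℝ (Fin d))).symm ∘ fderiv ℝ f := rfl

lemma gradient_contDiff_one {d : ℕ} (f : EuclideanSpace ℝ (Fin d) → ℝ)
    (hf : ContDiff ℝ 2 f) : ContDiff ℝ 1 (gradient f) := by
  rw [gradient_eq_comp]
  exact (toDual ℝ (EuclideanSpace ℝ (Fin d))).symm.contDiff.comp
    (hf.fderiv_right (by norm_num))

lemma inner_fderiv_gradient {d : ℕ} (f : EuclideanSpace ℝ (Fin d) → ℝ)
    (hf : ContDiff ℝ 2 f) (a u v : EuclideanSpace ℝ (Fin d)) :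
    ⟪u, fderiv ℝ (gradient f) a v⟫ = fderiv ℝ (fderiv ℝ f) a v u := by
  rw [gradient_eq_comp, LinearIsometryEquiv.comp_fderiv]
  rw [real_inner_comm]
  simp only [ContinuousLinearMap.coe_comp', Function.comp_apply]
  exact toDual_symm_apply

lemma fderiv_gradient_symm {d : ℕ} (f : EuclideanSpace ℝ (Fin d) → ℝ)
    (hf : ContDiff ℝ 2 f) (a u v : EuclideanSpace ℝ (Fin d)) :
    ⟪fderiv ℝ (gradient f) a u, v⟫ = ⟪u, fderiv ℝ (gradient f) a v⟫ := by
  rw [real_inner_comm, inner_fderiv_gradient f hf, inner_fderiv_gradient f hf]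
  exact (hf.contDiffAt.isSymmSndFDerivAt (by norm_num)) u v

lemma gd_step_contract {d : ℕ} (f : EuclideanSpace ℝ (Fin d) → ℝ)
    (L μ h : ℝ)
    (hf : ContDiff ℝ 2 f)
    (hsc : ∀ a v, μ * ‖v‖ ^ 2 ≤ inner ℝ v (fderiv ℝ (gradient f) a v))
    (hL : ∀ a, ‖fderiv ℝ (gradient f) a‖ ≤ L)
    (hμ : 0 < μ) (hμL : μ ≤ L) (hh : 0 < h) (hhL : h * L ≤ 1)
    (a b : EuclideanSpace ℝ (Fin d)) :
    ‖(a - h • gradient f a) - (b - h • gradient f b)‖ ≤ (1 - h * μ) * ‖a - b‖ := by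
  have hgrad : ContDiff ℝ 1 (gradient f) := gradient_contDiff_one f hf
  have hgd : Differentiable ℝ (gradient f) := hgrad.differentiable one_ne_zero
  have hdiff : ∀ z, DifferentiableAt ℝ (fun z => z - h • gradient f z) z := fun z =>
    (differentiable_id.sub ((hgd.const_smul h))) z
  have hfd : ∀ z : EuclideanSpace ℝ (Fin d),
      fderiv ℝ (fun z => z - h • gradient f z) z
        = ContinuousLinearMap.id ℝ _ - h • fderiv ℝ (gradient f) z := by
    intro z
    rw [fderiv_fun_sub (differentiableAt_fun_id) ((hgd z).fun_const_smul h), fderiv_id',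
      fderiv_fun_const_smul (hgd z)]
  have hnorm : ∀ z : EuclideanSpace ℝ (Fin d),
      ‖fderiv ℝ (fun z => z - h • gradient f z) z‖ ≤ 1 - h * μ := by
    intro z
    rw [hfd z]
    set A := fderiv ℝ (gradient f) z with hA
    set T := ContinuousLinearMap.id ℝ (EuclideanSpace ℝ (Fin d)) - h • A with hT
    have hc : (0:ℝ) ≤ 1 - h * μ := by nlinarith
    apply ContinuousLinearMap.opNorm_le_bound _ hc
    intro u
    apply sym_apply_norm_le T _ hc
    · intro u v
      simp only [hT, ContinuousLinearMap.sub_apply, ContinuousLinearMap.id_apply,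
        ContinuousLinearMap.smul_apply, inner_sub_left, inner_sub_right,
        real_inner_smul_left, real_inner_smul_right]
      rw [fderiv_gradient_symm f hf, ← hA]
    · intro v
      have hTv : ⟪T v, v⟫ = ‖v‖^2 - h * ⟪A v, v⟫ := by
        simp only [hT, ContinuousLinearMap.sub_apply, ContinuousLinearMap.id_apply,
          ContinuousLinearMap.smul_apply, inner_sub_left, real_inner_smul_left,
          real_inner_self_eq_norm_sq]
      have hAv : ⟪A v, v⟫ = ⟪v, A v⟫ := real_inner_comm _ _
      have hlow : μ * ‖v‖^2 ≤ ⟪v, A v⟫ := hsc z v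
      have hup : ⟪v, A v⟫ ≤ L * ‖v‖^2 := by
        calc ⟪v, A v⟫ ≤ ‖v‖ * ‖A v‖ := real_inner_le_norm _ _
        _ ≤ ‖v‖ * (‖A‖ * ‖v‖) := by
            exact mul_le_mul_of_nonneg_left (A.le_opNorm v) (norm_nonneg v)
        _ ≤ L * ‖v‖^2 := by nlinarith [norm_nonneg v, norm_nonneg (A : _ →L[ℝ] _),
            (hL z : ‖A‖ ≤ L)]
      rw [hTv, hAv, abs_le]
      constructor
      · nlinarith [sq_nonneg ‖v‖]
      · nlinarith [sq_nonneg ‖v‖]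
  have := Convex.norm_image_sub_le_of_norm_fderiv_le
    (f := fun z => z - h • gradient f z) (C := 1 - h * μ) (s := Set.univ)
    (fun z _ => hdiff z) (fun z _ => hnorm z) convex_univ (Set.mem_univ b) (Set.mem_univ a)
  simpa using this

lemma flow_step {d : ℕ} (f : EuclideanSpace ℝ (Fin d) → ℝ)
    (L ℓ h : ℝ)
    (hf : ContDiff ℝ 2 f)
    (hL : ∀ a, ‖fderiv ℝ (gradient f) a‖ ≤ L)
    (hh : 0 < h) (hLnn : 0 ≤ L)
    (y : ℝ → EuclideanSpace ℝ (Fin d))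
    (hflow : ∀ t, HasDerivAt y (-gradient f (y t)) t)
    (hℓ : ∀ t, 0 ≤ t → ‖gradient f (y t)‖ ≤ ℓ)
    (t : ℝ) (ht : 0 ≤ t) :
    ‖(y t - h • gradient f (y t)) - y (t + h)‖ ≤ L * ℓ / 2 * h ^ 2 := by
  set G := gradient f (y t) with hG
  have hgd : Differentiable ℝ (gradient f) := (gradient_contDiff_one f hf).differentiable one_ne_zero
  have hlip : ∀ p q : EuclideanSpace ℝ (Fin d),
      ‖gradient f p - gradient f q‖ ≤ L * ‖p - q‖ := fun p q =>
    Convex.norm_image_sub_le_of_norm_fderiv_le (fun z _ => (hgd z)) (fun z _ => hL z)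
      convex_univ trivial trivial
  have hycont : Continuous y := by
    rw [continuous_iff_continuousAt]; exact fun s => (hflow s).continuousAt
  -- speed bound on [t, t+h]
  have hyb : ∀ s ∈ Icc t (t + h), ‖y s - y t‖ ≤ ℓ * (s - t) := by
    apply norm_image_sub_le_of_norm_deriv_right_le_segment
      (hycont.continuousOn) (fun s _ => (hflow s).hasDerivWithinAt)
    intro s hs
    rw [norm_neg]
    exact hℓ s (le_trans ht hs.1)
  -- the deviation function
  set w : ℝ → EuclideanSpace ℝ (Fin d) := fun s => y s - y t + (s - t) • G with hw
  have hw' : ∀ s, HasDerivAt w (-gradient f (y s) + G) s := by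
    intro s
    have h1 : HasDerivAt (fun s => y s - y t) (-gradient f (y s)) s :=
      (hflow s).sub_const (y t)
    have h2 : HasDerivAt (fun s : ℝ => (s - t) • G) G s := by
      simpa using (((hasDerivAt_id s).sub_const t).smul_const G)
    exact h1.add h2
  have key : ∀ s ∈ Icc t (t + h), ‖w s‖ ≤ L * ℓ / 2 * (s - t) ^ 2 := by
    have key0 := image_norm_le_of_norm_deriv_right_le_deriv_boundary
      (f := w) (f' := fun s => -gradient f (y s) + G) (a := t) (b := t + h)
      (B := fun s => L * ℓ / 2 * (s - t) ^ 2)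
      (B' := fun s => L * ℓ * (s - t))
      (fun s _ => ((hw' s).continuousAt).continuousWithinAt)
      (fun s _ => (hw' s).hasDerivWithinAt)
      (by simp [hw])
    refine fun s hs => key0 ?_ ?_ hs
    · intro s
      have : HasDerivAt (fun s => L * ℓ / 2 * (s - t) ^ 2)
          (L * ℓ / 2 * (2 * (s - t) ^ 1 * 1)) s :=
        (((hasDerivAt_id s).sub_const t).pow 2).const_mul _
      convert this using 1
      ring
    · intro s hs
      have h1 : ‖-gradient f (y s) + G‖ = ‖G - gradient f (y s)‖ := by
        rw [neg_add_eq_sub]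
      rw [h1, hG]
      calc ‖gradient f (y t) - gradient f (y s)‖ ≤ L * ‖y t - y s‖ := hlip _ _
        _ = L * ‖y s - y t‖ := by rw [norm_sub_rev]
        _ ≤ L * (ℓ * (s - t)) := mul_le_mul_of_nonneg_left (hyb s ⟨hs.1, hs.2.le⟩) hLnn
        _ = L * ℓ * (s - t) := by ring
  have hfinal := key (t + h) ⟨by linarith, le_refl _⟩
  have heq : (y t - h • G) - y (t + h) = -(w (t + h)) := by
    rw [hw]
    simp only []
    rw [show ((t + h) - t) = h by ring]
    module
  rw [heq, norm_neg]
  calc ‖w (t+h)‖ ≤ L * ℓ / 2 * ((t + h) - t)^2 := hfinal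
    _ = L * ℓ / 2 * h ^ 2 := by ring

/-- Shadowing with stochastic/perturbed gradients: if ‖∇̃f − ∇f‖ ≤ R, ε > R/μ and
0 < h ≤ min{2(με − R)/(ℓL), 1/L}, the sampled gradient flow is ε-shadowed by the
perturbed gradient descent orbit started at y₀. -/
theorem perturbed_gradient_descent_shadowing {d : ℕ}
    (f : EuclideanSpace ℝ (Fin d) → ℝ)
    (g : EuclideanSpace ℝ (Fin d) → EuclideanSpace ℝ (Fin d))
    (L μ ℓ R ε h : ℝ)
    (hf : ContDiff ℝ 2 f)
    (hsc : ∀ a v, μ * ‖v‖ ^ 2 ≤ inner ℝ v (fderiv ℝ (gradient f) a v))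
    (hL : ∀ a, ‖fderiv ℝ (gradient f) a‖ ≤ L)
    (hμ : 0 < μ) (hLpos : 0 < L) (hℓpos : 0 < ℓ) (hR : 0 ≤ R)
    (hpert : ∀ x, ‖g x - gradient f x‖ ≤ R)
    (hε : R / μ < ε)
    (y : ℝ → EuclideanSpace ℝ (Fin d))
    (hflow : ∀ t : ℝ, HasDerivAt y (-gradient f (y t)) t)
    (hℓ : ∀ t : ℝ, 0 ≤ t → ‖gradient f (y t)‖ ≤ ℓ)
    (hh : 0 < h) (hhbound : h ≤ min (2 * (μ * ε - R) / (ℓ * L)) (1 / L))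
    (x : ℕ → EuclideanSpace ℝ (Fin d))
    (hx0 : x 0 = y 0)
    (hgd : ∀ k : ℕ, x (k + 1) = x k - h • g (x k)) :
    ∀ k : ℕ, ‖x k - y ((k : ℝ) * h)‖ ≤ ε := by
  have hεpos : 0 < ε := lt_of_le_of_lt (div_nonneg hR hμ.le) hε
  rcases Nat.eq_zero_or_pos d with hd | hd
  · subst hd
    intro k
    have hz : (x k - y ((k:ℝ)*h)) = 0 := Subsingleton.elim _ _
    rw [hz, norm_zero]
    exact hεpos.le
  have hμL : μ ≤ L := by
    set v : EuclideanSpace ℝ (Fin d) := EuclideanSpace.single ⟨0, hd⟩ (1:ℝ) with hv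
    have hvn : ‖v‖ = 1 := by simp [hv]
    have h1 := hsc (y 0) v
    set A := fderiv ℝ (gradient f) (y 0) with hA
    have h2 : (inner ℝ v (A v) : ℝ) ≤ L := by
      calc (inner ℝ v (A v) : ℝ) ≤ ‖v‖ * ‖A v‖ := real_inner_le_norm _ _
        _ ≤ ‖v‖ * (‖A‖ * ‖v‖) := mul_le_mul_of_nonneg_left (A.le_opNorm v) (norm_nonneg _)
        _ ≤ L := by rw [hvn]; linarith [hL (y 0)]
    rw [hvn] at h1
    calc μ = μ * 1 ^ 2 := by ring
      _ ≤ (inner ℝ v (A v) : ℝ) := h1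
      _ ≤ L := h2
  have hh1 : h * L ≤ 1 := by
    have h1 := le_trans hhbound (min_le_right _ _)
    rwa [le_div_iff₀ hLpos] at h1
  have hh2 : h * (ℓ * L) ≤ 2 * (μ * ε - R) := by
    have h1 := le_trans hhbound (min_le_left _ _)
    rwa [le_div_iff₀ (by positivity)] at h1
  have hμh : h * μ ≤ 1 := le_trans (by nlinarith) hh1
  intro k
  induction k with
  | zero => simpa [hx0] using hεpos.le
  | succ k ih =>
    set t := (k:ℝ) * h with hts
    have ht0 : 0 ≤ t := by positivity
    have htk : ((k+1 : ℕ) : ℝ) * h = t + h := by push_cast [hts]; ring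
    rw [htk]
    have e1 : ‖h • (gradient f (x k) - g (x k))‖ ≤ h * R := by
      rw [norm_smul, Real.norm_eq_abs, abs_of_pos hh, norm_sub_rev]
      exact mul_le_mul_of_nonneg_left (hpert (x k)) hh.le
    have e2 : ‖(x k - h • gradient f (x k)) - (y t - h • gradient f (y t))‖
        ≤ (1 - h * μ) * ‖x k - y t‖ :=
      gd_step_contract f L μ h hf hsc hL hμ hμL hh hh1 (x k) (y t)
    have e3 : ‖(y t - h • gradient f (y t)) - y (t + h)‖ ≤ L * ℓ / 2 * h ^ 2 :=
      flow_step f L ℓ h hf hL hh hLpos.le y hflow hℓ t ht0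
    have edecomp : x (k+1) - y (t + h) =
        (h • (gradient f (x k) - g (x k))) +
        ((x k - h • gradient f (x k)) - (y t - h • gradient f (y t))) +
        ((y t - h • gradient f (y t)) - y (t + h)) := by
      rw [hgd k]; module
    have e4 : ‖x (k+1) - y (t + h)‖ ≤ h * R + (1 - h * μ) * ‖x k - y t‖
        + L * ℓ / 2 * h ^ 2 := by
      rw [edecomp]
      exact le_trans (norm_add₃_le) (by gcongr)
    have e5 : (1 - h * μ) * ‖x k - y t‖ ≤ (1 - h * μ) * ε :=
      mul_le_mul_of_nonneg_left ih (by linarith)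
    have := mul_le_mul_of_nonneg_left hh2 hh.le
    nlinarith [e4, e5]
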